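/- Let M be a complete Riemannian manifold, f : M → ℝ 1-Lipschitz, p ∈ M, and suppose γ : [f(p) − δ, f(p)] → M is a unit speed minimal geodesic ending at p = γ(f(p)) with f(γ(t)) = t for all t. Let c : (a,b) → M be a curve differentiable at t₀ with c(t₀) = p, such that f ∘ c is differentiable at t₀. Then (f ∘ c)′(t₀) = ⟨γ′(f(p)), c′(t₀)⟩, the Riemannian inner product of the velocity of γ at p with c′(t₀). -/

import Mathlib

/-- First variation formula along an `f`-geodesic ending at `p` (Euclidean
model of a complete Riemannian manifold): if `γ` is a unit speed minimal
geodesic ending at `p = γ (f p)` with `f (γ t) = t`, and `c` is a curve through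
`p = c t₀` such that `c` and `f ∘ c` are differentiable at `t₀`, then
`(f ∘ c)' t₀ = ⟨γ'(f p), c' t₀⟩`. -/
theorem deriv_along_curve_eq_inner_with_f_geodesic_velocity
    {E : Type*} [NormedAddCommGroup E] [InnerProductSpace ℝ E]
    [CompleteSpace E]
    (f : E → ℝ) (hf : LipschitzWith 1 f)
    (p : E) (δ : ℝ) (hδ : 0 < δ)
    (γ : ℝ → E) (hγp : γ (f p) = p)
    (hγgeo : ∀ s t : ℝ, f p - δ ≤ s → s ≤ t → t ≤ f p →
      dist (γ s) (γ t) = t - s)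
    (hγf : ∀ t ∈ Set.Icc (f p - δ) (f p), f (γ t) = t)
    (v : E) (hv : HasDerivWithinAt γ v (Set.Icc (f p - δ) (f p)) (f p))
    (a b t₀ : ℝ) (ht₀ : t₀ ∈ Set.Ioo a b)
    (c : ℝ → E) (hc : c t₀ = p)
    (c' : E) (hc' : HasDerivAt c c' t₀)
    (y : ℝ) (hy : HasDerivAt (f ∘ c) y t₀) :
    y = (inner ℝ v c' : ℝ) := by
  set s₀ : ℝ := f p - δ with hs₀
  set q : E := γ s₀ with hqdef
  have hs₀lt : s₀ < f p := by simp [hs₀]; linarith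
  -- distance from q to p is δ
  have hqp : ‖p - q‖ = δ := by
    have := hγgeo s₀ (f p) le_rfl hs₀lt.le le_rfl
    rw [hγp] at this
    rw [← dist_eq_norm, dist_comm]
    rw [this]; ring
  have hfq : f q = s₀ := hγf s₀ ⟨le_rfl, hs₀lt.le⟩
  -- γ coincides on the interval with the affine line L
  set L : ℝ → E := fun t => δ⁻¹ • ((t - s₀) • p + (f p - t) • q) with hL
  have hγL : ∀ s ∈ Set.Icc s₀ (f p), γ s = L s := by
    intro s hs
    obtain ⟨hs1, hs2⟩ := hs
    have h1 : ‖γ s - q‖ = s - s₀ := by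
      have := hγgeo s₀ s le_rfl hs1 hs2
      rw [dist_comm, dist_eq_norm] at this; exact this
    have h2 : ‖p - γ s‖ = f p - s := by
      have := hγgeo s (f p) hs1 hs2 le_rfl
      rw [hγp, dist_comm, dist_eq_norm] at this; exact this
    have hray : SameRay ℝ (γ s - q) (p - γ s) := by
      rw [sameRay_iff_norm_add]
      have : γ s - q + (p - γ s) = p - q := by abel
      rw [this, hqp, h1, h2]; ring
    have key := hray.norm_smul_eq
    rw [h1, h2] at key
    -- (s - s₀) • (p - γ s) = (f p - s) • (γ s - q)
    have hδγ : δ • γ s = (s - s₀) • p + (f p - s) • q := by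
      have hδeq : δ = (s - s₀) + (f p - s) := by ring
      rw [smul_sub, smul_sub] at key
      rw [hδeq, add_smul]
      rw [sub_eq_sub_iff_add_eq_add] at key
      -- key : (s - s₀) • p + (f p - s) • q = (f p - s) • γ s + (s - s₀) • γ s
      rw [key]
      abel
    show γ s = δ⁻¹ • ((s - s₀) • p + (f p - s) • q)
    rw [← hδγ, smul_smul, inv_mul_cancel₀ hδ.ne', one_smul]
  -- identify v
  have hLderiv : HasDerivWithinAt L (δ⁻¹ • (p - q)) (Set.Icc s₀ (f p)) (f p) := by
    have : HasDerivAt L (δ⁻¹ • (p - q)) (f p) := by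
      have h1 : HasDerivAt (fun t : ℝ => (t - s₀) • p + (f p - t) • q)
          ((1 : ℝ) • p + ((0:ℝ) - 1) • q) (f p) := by
        exact (((hasDerivAt_id (f p)).sub_const s₀).smul_const p).add
          (((hasDerivAt_const (f p) (f p)).sub (hasDerivAt_id (f p))).smul_const q)
      have := h1.const_smul δ⁻¹
      convert this using 1
      case e'_8 => rfl
      simp [smul_sub, sub_eq_add_neg]
    exact this.hasDerivWithinAt
  have hvL : HasDerivWithinAt L v (Set.Icc s₀ (f p)) (f p) := by
    refine hv.congr (fun s hs => (hγL s hs).symm) ?_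
    exact (hγL (f p) ⟨hs₀lt.le, le_rfl⟩).symm
  have hveq : v = δ⁻¹ • (p - q) :=
    (uniqueDiffOn_Icc hs₀lt (f p) ⟨hs₀lt.le, le_rfl⟩).eq_deriv _ hvL hLderiv
  have hpq : p - q = δ • v := by rw [hveq, smul_smul, mul_inv_cancel₀ hδ.ne', one_smul]
  -- derivative of t ↦ ‖c t - q‖ at t₀
  have hcq : HasDerivAt (fun t => c t - q) c' t₀ := hc'.sub_const q
  have hnsq : HasDerivAt (fun t => ‖c t - q‖ ^ 2) (2 * inner ℝ (c t₀ - q) c') t₀ :=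
    hcq.norm_sq
  have hval : ‖c t₀ - q‖ ^ 2 = δ ^ 2 := by rw [hc, hqp]
  have hsqrt : HasDerivAt (fun t => Real.sqrt (‖c t - q‖ ^ 2))
      ((2 * inner ℝ (c t₀ - q) c') / (2 * Real.sqrt (‖c t₀ - q‖ ^ 2))) t₀ := by
    refine HasDerivAt.sqrt hnsq ?_
    rw [hval]; positivity
  have hN : HasDerivAt (fun t => ‖c t - q‖) ((inner ℝ v c' : ℝ)) t₀ := by
    have hfun : (fun t => Real.sqrt (‖c t - q‖ ^ 2)) = fun t => ‖c t - q‖ := by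
      funext t; rw [Real.sqrt_sq (norm_nonneg _)]
    rw [hfun] at hsqrt
    convert hsqrt using 1
    rw [hval, hc, hpq, Real.sqrt_sq hδ.le, real_inner_smul_left]
    field_simp
  -- g has a global max at t₀
  have hg : HasDerivAt (fun t => (f ∘ c) t - ‖c t - q‖) (y - inner ℝ v c') t₀ := hy.sub hN
  have hmax : IsLocalMax (fun t => (f ∘ c) t - ‖c t - q‖) t₀ := by
    apply Filter.Eventually.of_forall
    intro t
    have hlip : f (c t) - f q ≤ ‖c t - q‖ := by
      have := hf.dist_le_mul (c t) q
      rw [NNReal.coe_one, one_mul, Real.dist_eq, dist_eq_norm] at this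
      calc f (c t) - f q ≤ |f (c t) - f q| := le_abs_self _
        _ ≤ ‖c t - q‖ := this
    have ht₀val : (f ∘ c) t₀ - ‖c t₀ - q‖ = f q := by
      simp only [Function.comp_apply, hc, hqp, hfq, hs₀]
    simp only [Function.comp_apply] at ht₀val ⊢
    rw [ht₀val]
    linarith
  have := hmax.hasDerivAt_eq_zero hg
  linarith [this]
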